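/- Let T be a t-norm, t an additive generator of a continuous Archimedean t-norm with corresponding T-power implication I^T, ε ∈ (0,1], and G_n an n-ary aggregation function. Then G_n aggregates every n-tuple of ε-T-transitive fuzzy relations (with respect to I^T) into an ε-T-transitive relation if and only if T(G_n(a₁,…,aₙ), G_n(b₁,…,bₙ)) ≤ t⁻¹(ε · t(G_n(t⁻¹(t(T(a₁,b₁))/ε),…, t⁻¹(t(T(aₙ,bₙ))/ε)))) for all a_i, b_i ∈ [0,1]. -/

import Mathlib

open Set ENNReal

/-- A t-norm on the unit interval (viewed as a binary operation on ℝ). -/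
def IsTnorm (T : ℝ → ℝ → ℝ) : Prop :=
  (∀ x ∈ Icc (0:ℝ) 1, ∀ y ∈ Icc (0:ℝ) 1, T x y ∈ Icc (0:ℝ) 1) ∧
  (∀ x y, T x y = T y x) ∧
  (∀ x y z, T (T x y) z = T x (T y z)) ∧
  (∀ x y z, y ≤ z → T x y ≤ T x z) ∧
  (∀ x ∈ Icc (0:ℝ) 1, T x 1 = x)

/-- Proposition 4.4: `G` aggregates every n-tuple of ε-T-transitive fuzzy relations
with respect to the T-power implication generated by the additive generator `t`
(i.e. `T(R(x,y),R(y,z)) ≤ t⁻¹(ε·t(R(x,z)))`) into an ε-T-transitive relation iff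
`T(G(a),G(b)) ≤ t⁻¹(ε · t(G(fun i => t⁻¹(t(T(aᵢ,bᵢ))/ε))))` for all `aᵢ,bᵢ ∈ [0,1]`. -/
theorem stmt_13 (n : ℕ)
    (T : ℝ → ℝ → ℝ) (hT : IsTnorm T)
    (t : ℝ → ℝ≥0∞) (tinv : ℝ≥0∞ → ℝ)
    (htcont : ContinuousOn t (Icc (0:ℝ) 1))
    (htanti : StrictAntiOn t (Icc (0:ℝ) 1))
    (ht1 : t 1 = 0)
    (htinvt : ∀ x ∈ Icc (0:ℝ) 1, tinv (t x) = x)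
    (htinv0 : ∀ s : ℝ≥0∞, t 0 ≤ s → tinv s = 0)
    (htinvmem : ∀ s : ℝ≥0∞, tinv s ∈ Icc (0:ℝ) 1)
    (ε : ℝ) (hε : ε ∈ Ioc (0:ℝ) 1)
    (G : (Fin n → ℝ) → ℝ)
    (hGmono : ∀ a b : Fin n → ℝ, (∀ i, a i ≤ b i) → G a ≤ G b)
    (hG0 : G (fun _ => 0) = 0) (hG1 : G (fun _ => 1) = 1)
    (hGmem : ∀ a : Fin n → ℝ, (∀ i, a i ∈ Icc (0:ℝ) 1) → G a ∈ Icc (0:ℝ) 1) :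
    (∀ (V : Type), (∃ x y z : V, x ≠ y ∧ y ≠ z ∧ x ≠ z) →
      ∀ R : Fin n → V → V → ℝ,
        (∀ i x y, R i x y ∈ Icc (0:ℝ) 1) →
        (∀ i x y z, T (R i x y) (R i y z) ≤ tinv (ENNReal.ofReal ε * t (R i x z))) →
        ∀ x y z : V,
          T (G (fun i => R i x y)) (G (fun i => R i y z)) ≤
            tinv (ENNReal.ofReal ε * t (G (fun i => R i x z)))) ↔
      ∀ a b : Fin n → ℝ, (∀ i, a i ∈ Icc (0:ℝ) 1) → (∀ i, b i ∈ Icc (0:ℝ) 1) →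
        T (G a) (G b) ≤
          tinv (ENNReal.ofReal ε *
            t (G (fun i => tinv (t (T (a i) (b i)) / ENNReal.ofReal ε)))) := by
  obtain ⟨hTmem, hTcomm, hTassoc, hTmono, hTone⟩ := hT
  obtain ⟨hε0, hε1⟩ := hε
  set E : ℝ≥0∞ := ENNReal.ofReal ε with hE
  have hE0 : E ≠ 0 := by simp [hE, ENNReal.ofReal_pos, hε0]
  have hEtop : E ≠ ∞ := ENNReal.ofReal_ne_top
  have hE1 : E ≤ 1 := by simpa [hE] using ENNReal.ofReal_le_one.2 hε1
  have h01 : (0:ℝ) ∈ Icc (0:ℝ) 1 := ⟨le_refl 0, zero_le_one⟩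
  have h11 : (1:ℝ) ∈ Icc (0:ℝ) 1 := ⟨zero_le_one, le_refl 1⟩
  -- t is antitone on [0,1]
  have tAnti : ∀ u ∈ Icc (0:ℝ) 1, ∀ v ∈ Icc (0:ℝ) 1, u ≤ v → t v ≤ t u := by
    intro u hu v hv huv
    rcases eq_or_lt_of_le huv with rfl | h
    · exact le_refl _
    · exact (htanti hu hv h).le
  -- surjectivity of t onto [0, t 0]
  have hsurj : ∀ s : ℝ≥0∞, s ≤ t 0 → ∃ x ∈ Icc (0:ℝ) 1, t x = s := by
    intro s hs
    have h := intermediate_value_Icc' (zero_le_one) htcont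
    have : s ∈ Icc (t 1) (t 0) := ⟨by rw [ht1]; exact zero_le, hs⟩
    obtain ⟨x, hx, hxs⟩ := h this
    exact ⟨x, hx, hxs⟩
  -- tinv is antitone everywhere
  have hanti : ∀ s s' : ℝ≥0∞, s ≤ s' → tinv s' ≤ tinv s := by
    intro s s' hss
    by_cases h0 : t 0 ≤ s
    · rw [htinv0 s h0, htinv0 s' (h0.trans hss)]
    · push_neg at h0
      obtain ⟨x, hx, rfl⟩ := hsurj s h0.le
      rw [htinvt x hx]
      by_cases h1 : t 0 ≤ s'
      · rw [htinv0 s' h1]; exact hx.1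
      · push_neg at h1
        obtain ⟨x', hx', rfl⟩ := hsurj s' h1.le
        rw [htinvt x' hx']
        by_contra hc
        push_neg at hc
        exact absurd hss (not_le.2 (htanti hx hx' hc))
  have htinvzero : tinv 0 = 1 := by
    have := htinvt 1 h11
    rwa [ht1] at this
  -- basic T facts
  have hT1w : ∀ w ∈ Icc (0:ℝ) 1, T 1 w = w := by
    intro w hw; rw [hTcomm]; exact hTone w hw
  have hTle_left : ∀ u ∈ Icc (0:ℝ) 1, ∀ v ∈ Icc (0:ℝ) 1, T u v ≤ u := by
    intro u hu v hv
    calc T u v ≤ T u 1 := hTmono u v 1 hv.2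
    _ = u := hTone u hu
  have hTle_right : ∀ u ∈ Icc (0:ℝ) 1, ∀ v ∈ Icc (0:ℝ) 1, T u v ≤ v := by
    intro u hu v hv
    rw [hTcomm]; exact hTle_left v hv u hu
  -- w ≤ tinv (E * t w)
  have hL2 : ∀ w ∈ Icc (0:ℝ) 1, w ≤ tinv (E * t w) := by
    intro w hw
    have : E * t w ≤ t w := by
      calc E * t w ≤ 1 * t w := mul_le_mul_left hE1 _
      _ = t w := one_mul _
    have h := hanti _ _ this
    rwa [htinvt w hw] at h
  -- key lemma M
  have hM : ∀ u r : ℝ, u ∈ Icc (0:ℝ) 1 → r ∈ Icc (0:ℝ) 1 →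
      u ≤ tinv (E * t r) → tinv (t u / E) ≤ r := by
    intro u r hu hr hur
    by_cases h : E * t r ≤ t 0
    · obtain ⟨x, hx, hxe⟩ := hsurj _ h
      rw [← hxe, htinvt x hx] at hur
      have h1 : t x ≤ t u := tAnti u hu x hx hur
      rw [hxe] at h1
      have h2 : t r ≤ t u / E :=
        (ENNReal.le_div_iff_mul_le (Or.inl hE0) (Or.inl hEtop)).2
          (by rwa [mul_comm])
      have := hanti _ _ h2
      rwa [htinvt r hr] at this
    · exfalso
      push_neg at h
      have h1 : E * t r ≤ t r := by
        calc E * t r ≤ 1 * t r := mul_le_mul_left hE1 _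
        _ = t r := one_mul _
      have h2 : t r ≤ t 0 := tAnti 0 h01 r hr hr.1
      exact absurd (h.trans_le (h1.trans h2)) (lt_irrefl _)
  -- key lemma K
  have hK : ∀ u : ℝ, u ∈ Icc (0:ℝ) 1 →
      u ≤ tinv (E * t (tinv (t u / E))) := by
    intro u hu
    by_cases h : t u / E ≤ t 0
    · obtain ⟨x, hx, hxe⟩ := hsurj _ h
      rw [← hxe, htinvt x hx, hxe, ENNReal.mul_div_cancel hE0 hEtop, htinvt u hu]
    · push_neg at h
      rw [htinv0 _ h.le]
      have h1 : E * t 0 < t u := by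
        have := (ENNReal.lt_div_iff_mul_lt (Or.inl hE0) (Or.inl hEtop)).1 h
        rwa [mul_comm] at this
      have := hanti _ _ h1.le
      rwa [htinvt u hu] at this
  -- c_i bounds
  have hCbound : ∀ u w : ℝ, u ∈ Icc (0:ℝ) 1 → w ∈ Icc (0:ℝ) 1 → u ≤ w →
      tinv (t u / E) ≤ tinv (E * t w) := by
    intro u w hu hw huw
    apply hanti
    calc E * t w ≤ 1 * t w := mul_le_mul_left hE1 _
    _ = t w := one_mul _
    _ ≤ t u := tAnti u hu w hw huw
    _ ≤ t u / E := (ENNReal.le_div_iff_mul_le (Or.inl hE0) (Or.inl hEtop)).2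
        (by calc t u * E ≤ t u * 1 := mul_le_mul_right hE1 _
            _ = t u := mul_one _)
  have htinvE1 : tinv (E * t 1) = 1 := by rw [ht1, mul_zero, htinvzero]
  constructor
  · -- forward direction
    intro h a b ha hb
    set c : Fin n → ℝ := fun i => tinv (t (T (a i) (b i)) / E) with hc
    have hcmem : ∀ i, c i ∈ Icc (0:ℝ) 1 := fun i => htinvmem _
    have hTab : ∀ i, T (a i) (b i) ∈ Icc (0:ℝ) 1 := fun i => hTmem _ (ha i) _ (hb i)
    set R : Fin n → Fin 3 → Fin 3 → ℝ := fun i u v =>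
      if u.1 = 0 ∧ v.1 = 1 then a i else if u.1 = 1 ∧ v.1 = 2 then b i
      else if u.1 = 0 ∧ v.1 = 2 then c i else 1 with hR
    have hRmem : ∀ i u v, R i u v ∈ Icc (0:ℝ) 1 := by
      intro i u v
      rw [hR]
      dsimp only
      split_ifs
      · exact ha i
      · exact hb i
      · exact hcmem i
      · exact h11
    have hRtrans : ∀ i (x y z : Fin 3),
        T (R i x y) (R i y z) ≤ tinv (E * t (R i x z)) := by
      intro i x y z
      fin_cases x <;> fin_cases y <;> fin_cases z <;>
        simp only [hR, Fin.isValue, Fin.mk_one, Fin.val_one, Fin.val_zero, Fin.val_two,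
          Fin.mk_zero, show ((0:Fin 3)).1 = 0 from rfl, show ((1:Fin 3)).1 = 1 from rfl,
          show ((2:Fin 3)).1 = 2 from rfl] <;>
        norm_num <;>
        first
        | (rw [htinvE1];
           refine (hTmem _ ?_ _ ?_).2 <;>
             first | exact ha i | exact hb i | exact hcmem i | exact h11)
        | (rw [hT1w _ (ha i)]; exact hL2 _ (ha i))
        | (rw [hTone _ (ha i)]; exact hL2 _ (ha i))
        | (rw [hT1w _ (hb i)]; exact hL2 _ (hb i))
        | (rw [hTone _ (hb i)]; exact hL2 _ (hb i))
        | (rw [hT1w _ (hcmem i)]; exact hL2 _ (hcmem i))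
        | (rw [hTone _ (hcmem i)]; exact hL2 _ (hcmem i))
        | (rw [hTone _ (hcmem i)];
           exact hCbound _ _ (hTab i) (ha i) (hTle_left _ (ha i) _ (hb i)))
        | (rw [hT1w _ (hcmem i)];
           exact hCbound _ _ (hTab i) (hb i) (hTle_right _ (ha i) _ (hb i)))
        | exact hK _ (hTab i)
    have key := h (Fin 3) ⟨0, 1, 2, by decide, by decide, by decide⟩ R hRmem hRtrans 0 1 2
    have e1 : (fun i => R i 0 1) = a := by
      funext i; rw [hR]; norm_num
    have e2 : (fun i => R i 1 2) = b := by
      funext i; rw [hR]; norm_num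
    have e3 : (fun i => R i 0 2) = c := by
      funext i; rw [hR]; norm_num
    rw [e1, e2, e3] at key
    exact key
  · -- reverse direction
    intro h V _ R hRmem hRtrans x y z
    have key := h (fun i => R i x y) (fun i => R i y z)
      (fun i => hRmem i x y) (fun i => hRmem i y z)
    refine key.trans (hanti _ _ ?_)
    apply mul_le_mul_right
    apply tAnti
    · exact hGmem _ (fun i => htinvmem _)
    · exact hGmem _ (fun i => hRmem i x z)
    · apply hGmono
      intro i
      exact hM _ _ (hTmem _ (hRmem i x y) _ (hRmem i y z)) (hRmem i x z) (hRtrans i x y z)
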